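/- Under the hypotheses of the modified Krasnosel'skii–Mann theorem with additionally liminf λ_n > 0 and β_n → 1, the residuals satisfy ‖x_n - T x_n‖ → 0 as n → +∞. -/

import Mathlib

open Filter Topology

private lemma xu_lemma (a γ c : ℕ → ℝ) (ha : ∀ n, 0 ≤ a n)
    (hγ0 : ∀ n, 0 ≤ γ n) (hγ1 : ∀ n, γ n ≤ 1)
    (hc0 : ∀ n, 0 ≤ c n) (hcs : Summable c)
    (hγd : ¬ Summable γ)
    (hrec : ∀ n, a (n + 1) ≤ (1 - γ n) * a n + c n) :
    Tendsto a atTop (nhds 0) := by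
  have key : ∀ N n, N ≤ n →
      a n ≤ (∏ k ∈ Finset.Ico N n, (1 - γ k)) * a N + ∑ k ∈ Finset.Ico N n, c k := by
    intro N n hNn
    induction n, hNn using Nat.le_induction with
    | base => simp
    | succ n hNn ih =>
      have hprod0 : 0 ≤ ∏ k ∈ Finset.Ico N n, (1 - γ k) :=
        Finset.prod_nonneg fun k _ => by linarith [hγ1 k]
      have h2 : (1 - γ n) * a n ≤ (1 - γ n) * ((∏ k ∈ Finset.Ico N n, (1 - γ k)) * a N
          + ∑ k ∈ Finset.Ico N n, c k) :=
        mul_le_mul_of_nonneg_left ih (by linarith [hγ1 n])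
      have h3 : (1 - γ n) * (∑ k ∈ Finset.Ico N n, c k) ≤ ∑ k ∈ Finset.Ico N n, c k := by
        have hs : 0 ≤ ∑ k ∈ Finset.Ico N n, c k := Finset.sum_nonneg fun k _ => hc0 k
        nlinarith [hγ0 n]
      rw [Finset.prod_Ico_succ_top hNn, Finset.sum_Ico_succ_top hNn]
      calc a (n + 1) ≤ (1 - γ n) * a n + c n := hrec n
        _ ≤ (1 - γ n) * ((∏ k ∈ Finset.Ico N n, (1 - γ k)) * a N
              + ∑ k ∈ Finset.Ico N n, c k) + c n := by linarith
        _ ≤ (∏ k ∈ Finset.Ico N n, (1 - γ k)) * (1 - γ n) * a N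
              + (∑ k ∈ Finset.Ico N n, c k + c n) := by nlinarith [h3]
  have hγtop : Tendsto (fun n => ∑ i ∈ Finset.range n, γ i) atTop atTop :=
    (not_summable_iff_tendsto_nat_atTop_of_nonneg hγ0).1 hγd
  rw [Metric.tendsto_atTop]
  intro ε hε
  set L := ∑' n, c n with hL
  have hP : Tendsto (fun n => ∑ i ∈ Finset.range n, c i) atTop (nhds L) :=
    hcs.hasSum.tendsto_sum_nat
  have hev : ∀ᶠ N in atTop, L - ∑ i ∈ Finset.range N, c i < ε / 4 :=
    (tendsto_order.1 ((tendsto_const_nhds.sub hP).trans_eq (by simp) : Tendsto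
      (fun N => L - ∑ i ∈ Finset.range N, c i) atTop (nhds 0))).2 _ (by linarith)
  obtain ⟨N, hN⟩ := hev.exists
  have htail : ∀ n, ∑ k ∈ Finset.Ico N n, c k < ε / 4 := by
    intro n
    rcases le_or_gt N n with h | h
    · have heq : ∑ k ∈ Finset.range N, c k + ∑ k ∈ Finset.Ico N n, c k
          = ∑ k ∈ Finset.range n, c k := by
        rw [Finset.range_eq_Ico, Finset.range_eq_Ico]
        exact Finset.sum_Ico_consecutive _ (Nat.zero_le N) h
      have hle : ∑ k ∈ Finset.range n, c k ≤ L := Summable.sum_le_tsum _ (fun k _ => hc0 k) hcs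
      linarith
    · rw [Finset.Ico_eq_empty (by omega)]
      simpa using by linarith
  have hprod_le : ∀ n, (∏ k ∈ Finset.Ico N n, (1 - γ k))
      ≤ Real.exp (∑ k ∈ Finset.Ico N n, (-γ k)) := by
    intro n
    rw [Real.exp_sum]
    exact Finset.prod_le_prod (fun k _ => by linarith [hγ1 k])
      (fun k _ => by linarith [Real.add_one_le_exp (-γ k)])
  have hexp : Tendsto (fun n => Real.exp (∑ k ∈ Finset.Ico N n, (-γ k))) atTop (nhds 0) := by
    apply Real.tendsto_exp_atBot.comp
    have heqs : ∀ n, N ≤ n → ∑ k ∈ Finset.Ico N n, (-γ k)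
        = ∑ k ∈ Finset.range N, γ k - ∑ k ∈ Finset.range n, γ k := by
      intro n h
      rw [Finset.sum_neg_distrib]
      have heq : ∑ k ∈ Finset.range N, γ k + ∑ k ∈ Finset.Ico N n, γ k
          = ∑ k ∈ Finset.range n, γ k := by
        rw [Finset.range_eq_Ico, Finset.range_eq_Ico]
        exact Finset.sum_Ico_consecutive _ (Nat.zero_le N) h
      linarith
    have h2 : Tendsto (fun n => ∑ k ∈ Finset.range N, γ k - ∑ k ∈ Finset.range n, γ k)
        atTop atBot := tendsto_atBot_add_const_left _ _ (tendsto_neg_atBot_iff.2 hγtop)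
    exact h2.congr' (by filter_upwards [eventually_ge_atTop N] with n h using (heqs n h).symm)
  have hsmall : ∀ᶠ n in atTop,
      Real.exp (∑ k ∈ Finset.Ico N n, (-γ k)) * (a N + 1) < ε / 2 := by
    have h3 : Tendsto (fun n => Real.exp (∑ k ∈ Finset.Ico N n, (-γ k)) * (a N + 1))
        atTop (nhds 0) := by simpa using hexp.mul_const (a N + 1)
    exact (tendsto_order.1 h3).2 _ (by linarith)
  obtain ⟨M, hM⟩ := (hsmall.and (eventually_ge_atTop N)).exists_forall_of_atTop
  refine ⟨M, fun n hn => ?_⟩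
  obtain ⟨hMs, hMN⟩ := hM n hn
  have hk := key N n hMN
  have hprod0 : 0 ≤ ∏ k ∈ Finset.Ico N n, (1 - γ k) :=
    Finset.prod_nonneg fun k _ => by linarith [hγ1 k]
  have haN : 0 ≤ a N := ha N
  have hmain : (∏ k ∈ Finset.Ico N n, (1 - γ k)) * a N
      ≤ Real.exp (∑ k ∈ Finset.Ico N n, (-γ k)) * (a N + 1) := by
    have h1 := hprod_le n
    nlinarith [Real.exp_pos (∑ k ∈ Finset.Ico N n, (-γ k))]
  have := htail n
  rw [Real.dist_eq, sub_zero, abs_of_nonneg (ha n)]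
  linarith

/-- In the modified Krasnosel'skii–Mann algorithm, the residuals
satisfy `‖x n - T (x n)‖ → 0`. -/
theorem modKM_residual_to_zero
    {H : Type*} [NormedAddCommGroup H] [InnerProductSpace ℝ H] [CompleteSpace H]
    (T : H → H) (hT : ∀ x y : H, ‖T x - T y‖ ≤ ‖x - y‖)
    (hfix_ne : {z : H | T z = z}.Nonempty)
    (β lam : ℕ → ℝ)
    (hβ : ∀ n, 0 < β n ∧ β n ≤ 1)
    (hβlim : Tendsto β atTop (nhds 1))
    (hβdiv : ¬ Summable (fun n => 1 - β n))
    (hβvar : Summable (fun n => |β (n + 1) - β n|))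
    (hlam : ∀ n, 0 < lam n ∧ lam n ≤ 1)
    (hlaminf : 0 < Filter.liminf lam Filter.atTop)
    (hlamvar : Summable (fun n => |lam (n + 1) - lam n|))
    (x : ℕ → H)
    (hiter : ∀ n, x (n + 1) = β n • x n + lam n • (T (β n • x n) - β n • x n)) :
    Tendsto (fun n => ‖x n - T (x n)‖) atTop (nhds 0) := by
  obtain ⟨z, hz⟩ := hfix_ne
  simp only [Set.mem_setOf_eq] at hz
  set M := max ‖x 0 - z‖ ‖z‖ with hM
  have hzM : ‖z‖ ≤ M := le_max_right _ _
  have hyz : ∀ n, ‖β n • x n - z‖ ≤ β n * ‖x n - z‖ + (1 - β n) * ‖z‖ := by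
    intro n
    have hid : β n • x n - z = β n • (x n - z) + (β n - 1) • z := by module
    rw [hid]
    calc ‖β n • (x n - z) + (β n - 1) • z‖ ≤ ‖β n • (x n - z)‖ + ‖(β n - 1) • z‖ :=
          norm_add_le _ _
      _ = |β n| * ‖x n - z‖ + |β n - 1| * ‖z‖ := by
          rw [norm_smul, norm_smul, Real.norm_eq_abs, Real.norm_eq_abs]
      _ = β n * ‖x n - z‖ + (1 - β n) * ‖z‖ := by
          rw [abs_of_pos (hβ n).1, abs_of_nonpos (by linarith [(hβ n).2]), neg_sub]
  have hstep : ∀ n, ‖x (n + 1) - z‖ ≤ ‖β n • x n - z‖ := by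
    intro n
    set y := β n • x n with hy
    have hid : x (n + 1) - z = (1 - lam n) • (y - z) + lam n • (T y - z) := by
      rw [hiter n]; module
    have hTy : ‖T y - z‖ ≤ ‖y - z‖ := by
      calc ‖T y - z‖ = ‖T y - T z‖ := by rw [hz]
        _ ≤ ‖y - z‖ := hT _ _
    calc ‖x (n + 1) - z‖ = ‖(1 - lam n) • (y - z) + lam n • (T y - z)‖ := by rw [hid]
      _ ≤ |1 - lam n| * ‖y - z‖ + |lam n| * ‖T y - z‖ := by
          refine (norm_add_le _ _).trans ?_
          rw [norm_smul, norm_smul, Real.norm_eq_abs, Real.norm_eq_abs]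
      _ = (1 - lam n) * ‖y - z‖ + lam n * ‖T y - z‖ := by
          rw [abs_of_nonneg (by linarith [(hlam n).2]), abs_of_pos (hlam n).1]
      _ ≤ ‖y - z‖ := by nlinarith [(hlam n).1, (hlam n).2, norm_nonneg (y - z)]
  have hbd : ∀ n, ‖x n - z‖ ≤ M := by
    intro n
    induction n with
    | zero => exact le_max_left _ _
    | succ n ih =>
      calc ‖x (n + 1) - z‖ ≤ ‖β n • x n - z‖ := hstep n
        _ ≤ β n * ‖x n - z‖ + (1 - β n) * ‖z‖ := hyz n
        _ ≤ M := by nlinarith [(hβ n).1, (hβ n).2]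
  have hyzM : ∀ n, ‖β n • x n - z‖ ≤ M := fun n => (hyz n).trans
    (by nlinarith [(hβ n).1, (hβ n).2, hbd n])
  set K := M + ‖z‖ with hK
  have hxK : ∀ n, ‖x n‖ ≤ K := fun n => by
    calc ‖x n‖ = ‖x n - z + z‖ := by rw [sub_add_cancel]
      _ ≤ ‖x n - z‖ + ‖z‖ := norm_add_le _ _
      _ ≤ K := by linarith [hbd n]
  have hK0 : 0 ≤ K := le_trans (norm_nonneg _) (hxK 0)
  have hres : ∀ n, ‖T (β n • x n) - β n • x n‖ ≤ 2 * M := by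
    intro n
    set y := β n • x n with hy
    have h1 : ‖T y - z‖ ≤ ‖y - z‖ := by
      calc ‖T y - z‖ = ‖T y - T z‖ := by rw [hz]
        _ ≤ ‖y - z‖ := hT _ _
    calc ‖T y - y‖ = ‖(T y - z) - (y - z)‖ := by rw [sub_sub_sub_cancel_right]
      _ ≤ ‖T y - z‖ + ‖y - z‖ := norm_sub_le _ _
      _ ≤ 2 * M := by linarith [hyzM n]
  -- difference recurrence
  set a : ℕ → ℝ := fun n => ‖x (n + 1) - x n‖ with ha
  set c : ℕ → ℝ := fun n => |β (n + 1) - β n| * K + |lam (n + 1) - lam n| * (2 * M)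
    with hc
  have hM0 : 0 ≤ M := le_trans (norm_nonneg _) hzM
  have hrec : ∀ n, a (n + 1) ≤ (1 - (1 - β (n + 1))) * a n + c n := by
    intro n
    have hid : x (n + 2) - x (n + 1)
        = (1 - lam (n + 1)) • (β (n + 1) • x (n + 1) - β n • x n)
          + lam (n + 1) • (T (β (n + 1) • x (n + 1)) - T (β n • x n))
          + (lam (n + 1) - lam n) • (T (β n • x n) - β n • x n) := by
      rw [show n + 2 = (n + 1) + 1 from rfl, hiter (n + 1), hiter n]; module
    have hy10 : ‖β (n + 1) • x (n + 1) - β n • x n‖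
        ≤ β (n + 1) * a n + |β (n + 1) - β n| * K := by
      have hid2 : β (n + 1) • x (n + 1) - β n • x n
          = β (n + 1) • (x (n + 1) - x n) + (β (n + 1) - β n) • x n := by module
      rw [hid2]
      calc ‖β (n + 1) • (x (n + 1) - x n) + (β (n + 1) - β n) • x n‖
          ≤ ‖β (n + 1) • (x (n + 1) - x n)‖ + ‖(β (n + 1) - β n) • x n‖ := norm_add_le _ _
        _ = |β (n + 1)| * ‖x (n + 1) - x n‖ + |β (n + 1) - β n| * ‖x n‖ := by
            rw [norm_smul, norm_smul, Real.norm_eq_abs, Real.norm_eq_abs]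
        _ ≤ β (n + 1) * a n + |β (n + 1) - β n| * K := by
            rw [abs_of_pos (hβ (n + 1)).1]
            exact add_le_add le_rfl (mul_le_mul_of_nonneg_left (hxK n) (abs_nonneg _))
    have hTT : ‖T (β (n + 1) • x (n + 1)) - T (β n • x n)‖
        ≤ ‖β (n + 1) • x (n + 1) - β n • x n‖ := hT _ _
    have hr0 : ‖T (β n • x n) - β n • x n‖ ≤ 2 * M := hres n
    have hnorm : a (n + 1) ≤ (1 - lam (n + 1)) * ‖β (n + 1) • x (n + 1) - β n • x n‖
        + lam (n + 1) * ‖T (β (n + 1) • x (n + 1)) - T (β n • x n)‖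
        + |lam (n + 1) - lam n| * ‖T (β n • x n) - β n • x n‖ := by
      have h1 := norm_add_le
        ((1 - lam (n + 1)) • (β (n + 1) • x (n + 1) - β n • x n)
          + lam (n + 1) • (T (β (n + 1) • x (n + 1)) - T (β n • x n)))
        ((lam (n + 1) - lam n) • (T (β n • x n) - β n • x n))
      have h2 := norm_add_le ((1 - lam (n + 1)) • (β (n + 1) • x (n + 1) - β n • x n))
        (lam (n + 1) • (T (β (n + 1) • x (n + 1)) - T (β n • x n)))
      simp only [norm_smul, Real.norm_eq_abs] at h1 h2
      rw [abs_of_nonneg (by linarith [(hlam (n + 1)).2] : (0:ℝ) ≤ 1 - lam (n + 1)),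
        abs_of_pos (hlam (n + 1)).1] at h2
      calc a (n + 1) = ‖x (n + 2) - x (n + 1)‖ := rfl
        _ = ‖(1 - lam (n + 1)) • (β (n + 1) • x (n + 1) - β n • x n)
              + lam (n + 1) • (T (β (n + 1) • x (n + 1)) - T (β n • x n))
              + (lam (n + 1) - lam n) • (T (β n • x n) - β n • x n)‖ := by rw [hid]
        _ ≤ _ := by linarith
    have hcomb : (1 - lam (n + 1)) * ‖β (n + 1) • x (n + 1) - β n • x n‖
        + lam (n + 1) * ‖T (β (n + 1) • x (n + 1)) - T (β n • x n)‖
        ≤ ‖β (n + 1) • x (n + 1) - β n • x n‖ := by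
      nlinarith [(hlam (n + 1)).1, (hlam (n + 1)).2,
        norm_nonneg (β (n + 1) • x (n + 1) - β n • x n)]
    have hlampart : |lam (n + 1) - lam n| * ‖T (β n • x n) - β n • x n‖
        ≤ |lam (n + 1) - lam n| * (2 * M) :=
      mul_le_mul_of_nonneg_left hr0 (abs_nonneg _)
    have heq : (1 - (1 - β (n + 1))) * a n = β (n + 1) * a n := by ring
    simp only [hc]
    rw [heq]
    linarith [hy10]
  -- apply Xu's lemma
  have hcs : Summable c := (hβvar.mul_right K).add (hlamvar.mul_right (2 * M))
  have hγd : ¬ Summable (fun n => 1 - β (n + 1)) := by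
    intro hsum
    exact hβdiv ((summable_nat_add_iff 1).1 hsum)
  have hdiff : Tendsto a atTop (nhds 0) :=
    xu_lemma a (fun n => 1 - β (n + 1)) c (fun n => norm_nonneg _)
      (fun n => by show (0:ℝ) ≤ 1 - β (n + 1); linarith [(hβ (n + 1)).2])
      (fun n => by show 1 - β (n + 1) ≤ 1; linarith [(hβ (n + 1)).1])
      (fun n => add_nonneg (mul_nonneg (abs_nonneg _) hK0)
        (mul_nonneg (abs_nonneg _) (by linarith))) hcs hγd hrec
  -- final squeeze
  set δ := Filter.liminf lam Filter.atTop / 2 with hδ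
  have hδ0 : 0 < δ := by positivity
  have hlamδ : ∀ᶠ n in atTop, δ < lam n :=
    Filter.eventually_lt_of_lt_liminf (by rw [hδ]; linarith)
      (Filter.isBoundedUnder_of ⟨0, fun n => (hlam n).1.le⟩)
  have hxy : ∀ n, ‖x n - β n • x n‖ ≤ (1 - β n) * K := by
    intro n
    have hid : x n - β n • x n = (1 - β n) • x n := by module
    rw [hid, norm_smul, Real.norm_eq_abs, abs_of_nonneg (by linarith [(hβ n).2])]
    exact mul_le_mul_of_nonneg_left (hxK n) (by linarith [(hβ n).2])
  have hub : ∀ᶠ n in atTop, ‖x n - T (x n)‖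
      ≤ 2 * ((1 - β n) * K) + (a n + (1 - β n) * K) / δ := by
    filter_upwards [hlamδ] with n hlamn
    have hx1y : x (n + 1) - β n • x n = lam n • (T (β n • x n) - β n • x n) := by
      rw [hiter n]; module
    have hTyx : lam n * ‖T (β n • x n) - β n • x n‖ ≤ a n + (1 - β n) * K := by
      have h1 : ‖x (n + 1) - β n • x n‖ ≤ ‖x (n + 1) - x n‖ + ‖x n - β n • x n‖ := by
        have h0 := norm_add_le (x (n + 1) - x n) (x n - β n • x n)
        simpa [sub_add_sub_cancel] using h0
      have h2 : ‖x (n + 1) - β n • x n‖ = lam n * ‖T (β n • x n) - β n • x n‖ := by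
        rw [hx1y, norm_smul, Real.norm_eq_abs, abs_of_pos (hlam n).1]
      rw [← h2]
      exact h1.trans (add_le_add le_rfl (hxy n))
    have hTy2 : ‖T (β n • x n) - β n • x n‖ ≤ (a n + (1 - β n) * K) / δ := by
      rw [le_div_iff₀ hδ0]
      nlinarith [norm_nonneg (T (β n • x n) - β n • x n)]
    have hsplit : x n - T (x n) = (x n - β n • x n) + (β n • x n - T (β n • x n))
        + (T (β n • x n) - T (x n)) := by module
    have hthree : ‖x n - T (x n)‖ ≤ ‖x n - β n • x n‖ + ‖β n • x n - T (β n • x n)‖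
        + ‖T (β n • x n) - T (x n)‖ := by
      rw [hsplit]
      exact (norm_add_le _ _).trans (add_le_add (norm_add_le _ _) le_rfl)
    have hT3 : ‖T (β n • x n) - T (x n)‖ ≤ ‖x n - β n • x n‖ := by
      rw [norm_sub_rev (x n) (β n • x n)]
      exact hT _ _
    have hmid : ‖β n • x n - T (β n • x n)‖ = ‖T (β n • x n) - β n • x n‖ :=
      norm_sub_rev _ _
    calc ‖x n - T (x n)‖ ≤ ‖x n - β n • x n‖ + ‖β n • x n - T (β n • x n)‖
          + ‖T (β n • x n) - T (x n)‖ := hthree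
      _ ≤ (1 - β n) * K + (a n + (1 - β n) * K) / δ + (1 - β n) * K := by
          rw [hmid]
          exact add_le_add (add_le_add (hxy n) hTy2) (hT3.trans (hxy n))
      _ = 2 * ((1 - β n) * K) + (a n + (1 - β n) * K) / δ := by ring
  have hβ0 : Tendsto (fun n => 1 - β n) atTop (nhds 0) := by
    have h0 := (tendsto_const_nhds : Tendsto (fun _ : ℕ => (1:ℝ)) atTop (nhds 1)).sub hβlim
    simpa using h0
  have hg : Tendsto (fun n => 2 * ((1 - β n) * K) + (a n + (1 - β n) * K) / δ)
      atTop (nhds 0) := by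
    have h1 : Tendsto (fun n => (1 - β n) * K) atTop (nhds 0) := by
      simpa using hβ0.mul_const K
    have h2 : Tendsto (fun n => a n + (1 - β n) * K) atTop (nhds 0) := by
      simpa using hdiff.add h1
    have h3 : Tendsto (fun n => (a n + (1 - β n) * K) / δ) atTop (nhds 0) := by
      simpa using h2.div_const δ
    have h4 : Tendsto (fun n => 2 * ((1 - β n) * K)) atTop (nhds 0) := by
      simpa using h1.const_mul 2
    simpa using h4.add h3
  exact squeeze_zero' (Filter.Eventually.of_forall fun n => norm_nonneg _) hub hg
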